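/- Fix r > 0 and the setup of Φ[a,b,c,d]. The ℂ-linear span of the set P_r = {x_α ⊗ y_α : |α| = r} is exactly 5-dimensional. -/

import Mathlib

set_option maxHeartbeats 1000000

/-- The five coefficient vectors `w_{-2}, w_{-1}, w_0, w_1, w_2`. -/
def spanPrW (c d e f g h k r : ℝ) : Fin 5 → Fin 2 × Fin 4 → ℂ := fun j p =>
  (![![![0, 0, 0, 0],
      ![0, 0, 0, -(c:ℂ) * (r:ℂ)^4]],
    ![![0, 0, 0, -(c:ℂ) * (r:ℂ)^2],
      ![0, -(c:ℂ)*(d:ℂ)*(r:ℂ)^4, -((e:ℂ) + (f:ℂ)*(r:ℂ)^2)*(r:ℂ)^2, -(d:ℂ)*(r:ℂ)^4]],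
    ![![0, -(c:ℂ)*(d:ℂ)*(r:ℂ)^2, -((e:ℂ) + (f:ℂ)*(r:ℂ)^2), -(d:ℂ)*(r:ℂ)^2],
      ![(g:ℂ)*(r:ℂ)^2, ((h:ℂ) + (k:ℂ)*(r:ℂ)^2)*(r:ℂ)^2, 0, 0]],
    ![![(g:ℂ), (h:ℂ) + (k:ℂ)*(r:ℂ)^2, 0, 0],
      ![-(g:ℂ)*(r:ℂ)^2, -(c:ℂ)*(d:ℂ)*(r:ℂ)^2, 0, 0]],
    ![![-(g:ℂ), -(c:ℂ)*(d:ℂ), 0, 0],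
      ![0, 0, 0, 0]]] : Fin 5 → Fin 2 → Fin 4 → ℂ) j p.1 p.2

theorem spanPr_key (c d e f g h k r : ℝ) (hr : 0 < r) (α : ℂ)
    (hα : ‖α‖ = r) :
    (fun p : Fin 2 × Fin 4 =>
            (![1, starRingEnd ℂ α] : Fin 2 → ℂ) p.1 *
            (![(g : ℂ) * α * (1 - α),
               α * ((h : ℂ) - (c : ℂ) * (d : ℂ) * (α + starRingEnd ℂ α) +
                 (k : ℂ) * (‖α‖ : ℂ) ^ 2),
               -((e : ℂ) + (f : ℂ) * (‖α‖ : ℂ) ^ 2),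
               -(starRingEnd ℂ α) * ((c : ℂ) + (d : ℂ) * α)] : Fin 4 → ℂ) p.2)
    = ∑ j : Fin 5, (α ^ (j : ℕ) / α ^ 2) • spanPrW c d e f g h k r j := by
  have hα0 : α ≠ 0 := by
    intro h0
    rw [h0] at hα; simp at hα; exact absurd hα.symm (ne_of_gt hr)
  have hconj : starRingEnd ℂ α = (r:ℂ)^2 / α := by
    rw [eq_div_iff hα0]
    have := Complex.mul_conj' α
    rw [mul_comm] at this
    rw [this, hα]
  funext p
  obtain ⟨i, l⟩ := p
  fin_cases i <;> fin_cases l <;>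
    simp [spanPrW, hα, hconj, Fin.sum_univ_five, Matrix.vecHead, Matrix.vecTail,
      show ((3:Fin 5):ℕ) = 3 from rfl, show ((4:Fin 5):ℕ) = 4 from rfl] <;>
    field_simp <;> ring

/-- For fixed `r > 0`, the span of `P_r = {x_α ⊗ y_α : |α| = r}` is exactly
5-dimensional. -/
theorem span_Pr_finrank_five (a b c d e f g h k : ℝ)
    (ha : 0 < a) (hb : 0 < b) (hc : 0 < c) (hd : 0 < d) (hab : 1 < a * b)
    (hg : g = Real.sqrt (a * c * d))
    (he : e = a * (c + d) * c / (a * b - 1))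
    (hf : f = a * (c + d) * d / (a * b - 1))
    (hh : h = b * e - c ^ 2) (hk : k = b * f - d ^ 2)
    (r : ℝ) (hr : 0 < r) :
    Module.finrank ℂ
      ↥(Submodule.span ℂ
        {v : Fin 2 × Fin 4 → ℂ | ∃ α : ℂ, ‖α‖ = r ∧
          v = fun p =>
            (![1, starRingEnd ℂ α] : Fin 2 → ℂ) p.1 *
            (![(g : ℂ) * α * (1 - α),
               α * ((h : ℂ) - (c : ℂ) * (d : ℂ) * (α + starRingEnd ℂ α) +
                 (k : ℂ) * (‖α‖ : ℂ) ^ 2),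
               -((e : ℂ) + (f : ℂ) * (‖α‖ : ℂ) ^ 2),
               -(starRingEnd ℂ α) * ((c : ℂ) + (d : ℂ) * α)] : Fin 4 → ℂ) p.2}) = 5 := by
  -- positivity facts
  have hg' : 0 < g := by rw [hg]; exact Real.sqrt_pos.mpr (by positivity)
  have hab' : 0 < a * b - 1 := by linarith
  have he' : 0 < e := by rw [he]; exact div_pos (by positivity) hab'
  have hf' : 0 < f := by rw [hf]; exact div_pos (by positivity) hab'
  have hef : 0 < e + f * r ^ 2 := by positivity
  have hgC : (g:ℂ) ≠ 0 := Complex.ofReal_ne_zero.mpr hg'.ne'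
  have hcC : (c:ℂ) ≠ 0 := Complex.ofReal_ne_zero.mpr hc.ne'
  have hdC : (d:ℂ) ≠ 0 := Complex.ofReal_ne_zero.mpr hd.ne'
  have hrC : (r:ℂ) ≠ 0 := Complex.ofReal_ne_zero.mpr hr.ne'
  have hefC : (e:ℂ) + (f:ℂ)*(r:ℂ)^2 ≠ 0 := by
    have hcast : (e:ℂ) + (f:ℂ)*(r:ℂ)^2 = ((e + f * r ^ 2 : ℝ) : ℂ) := by push_cast; ring
    rw [hcast]
    exact Complex.ofReal_ne_zero.mpr hef.ne'
  set W : Fin 5 → Fin 2 × Fin 4 → ℂ := spanPrW c d e f g h k r with hWdef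
  -- linear independence of the coefficient vectors
  have hWli : LinearIndependent ℂ W := by
    rw [Fintype.linearIndependent_iff]
    intro t ht
    have q0 := congrFun ht (0,0)
    have q2 := congrFun ht (0,2)
    have q3 := congrFun ht (1,0)
    have q4 := congrFun ht (1,2)
    have q5 := congrFun ht (1,3)
    simp [hWdef, spanPrW, Fin.sum_univ_five, Matrix.vecHead, Matrix.vecTail] at q0 q2 q3 q4 q5
    have hef2 : ¬(-((f:ℂ) * (r:ℂ) ^ 2) + -(e:ℂ) = 0) := by
      intro h'; apply hefC; linear_combination -h'
    have ht1 : t 1 = 0 := by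
      rcases q4 with h' | h' | h'
      · exact h'
      · exact absurd h' hef2
      · exact absurd h' hr.ne'
    have ht0 : t 0 = 0 := by
      rw [ht1] at q5
      simp at q5
      rcases q5 with h' | h' | h'
      · exact h'
      · exact absurd h' hc.ne'
      · exact absurd h' hr.ne'
    have ht2 : t 2 = 0 := by
      rcases q2 with h' | h'
      · exact h'
      · exact absurd h' hef2
    have ht3 : t 3 = 0 := by
      rw [ht2] at q3
      simp at q3
      rcases q3 with h' | h' | h'
      · exact h'
      · exact absurd h' hg'.ne'
      · exact absurd h' hr.ne'
    have ht4 : t 4 = 0 := by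
      rw [ht3] at q0
      simp at q0
      rcases q0 with h' | h'
      · exact h'
      · exact absurd h' hg'.ne'
    intro i
    fin_cases i <;> assumption
  -- five sample points on the circle
  set z : Fin 5 → ℂ := ![1, -1, Complex.I, -Complex.I, (3/5 : ℂ) + (4/5 : ℂ)*Complex.I]
    with hzdef
  set A : Fin 5 → ℂ := fun m => (r:ℂ) * z m with hAdef
  have hzabs : ∀ m, ‖z m‖ = 1 := by
    intro m
    fin_cases m <;>
      simp [hzdef, Complex.norm_def, Complex.normSq_apply] <;>
      norm_num
  have hAabs : ∀ m, ‖A m‖ = r := by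
    intro m
    rw [hAdef]
    simp [norm_mul, Complex.norm_real, abs_of_pos hr, hzabs m]
  have hzinj : Function.Injective z := by
    intro m n hmn
    fin_cases m <;> fin_cases n <;>
      first
        | rfl
        | (exfalso; simp [hzdef, Complex.ext_iff] at hmn <;> norm_num at hmn)
  have hAinj : Function.Injective A := by
    intro m n hmn
    exact hzinj (mul_left_cancel₀ hrC hmn)
  have hA0 : ∀ m, A m ≠ 0 := by
    intro m h0
    have := hAabs m
    rw [h0] at this; simp at this; exact hr.ne' this.symm
  -- the coefficient matrix
  set C : Matrix (Fin 5) (Fin 5) ℂ := Matrix.of fun m j => A m ^ (j:ℕ) / A m ^ 2 with hCdef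
  have hCfact : C = Matrix.diagonal (fun m => (A m ^ 2)⁻¹) * Matrix.vandermonde A := by
    ext m j
    simp [hCdef, Matrix.diagonal_mul, Matrix.vandermonde_apply, div_eq_inv_mul]
  have hCdet : C.det ≠ 0 := by
    rw [hCfact, Matrix.det_mul, Matrix.det_diagonal]
    refine mul_ne_zero (Finset.prod_ne_zero_iff.mpr fun m _ => ?_)
      (Matrix.det_vandermonde_ne_zero_iff.mpr hAinj)
    exact inv_ne_zero (pow_ne_zero _ (hA0 m))
  have hCrows : LinearIndependent ℂ (fun m => C m) :=
    Matrix.linearIndependent_rows_iff_isUnit.mpr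
      ((Matrix.isUnit_iff_isUnit_det C).mpr (isUnit_iff_ne_zero.mpr hCdet))
  -- the linear map sending coefficients to combinations of W
  set L : (Fin 5 → ℂ) →ₗ[ℂ] (Fin 2 × Fin 4 → ℂ) :=
    { toFun := fun t => ∑ j, t j • W j
      map_add' := by intro x y; simp [add_smul, Finset.sum_add_distrib]
      map_smul' := by intro s x; simp [smul_smul, Finset.smul_sum] } with hLdef
  have hLker : LinearMap.ker L = ⊥ := by
    rw [LinearMap.ker_eq_bot']
    intro t ht
    funext i
    exact Fintype.linearIndependent_iff.mp hWli t ht i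
  -- the sample vectors
  set Vfam : Fin 5 → Fin 2 × Fin 4 → ℂ := fun m => fun p =>
            (![1, starRingEnd ℂ (A m)] : Fin 2 → ℂ) p.1 *
            (![(g : ℂ) * A m * (1 - A m),
               A m * ((h : ℂ) - (c : ℂ) * (d : ℂ) * (A m + starRingEnd ℂ (A m)) +
                 (k : ℂ) * (‖A m‖ : ℂ) ^ 2),
               -((e : ℂ) + (f : ℂ) * (‖A m‖ : ℂ) ^ 2),
               -(starRingEnd ℂ (A m)) * ((c : ℂ) + (d : ℂ) * A m)] : Fin 4 → ℂ) p.2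
    with hVdef
  have hVeq : Vfam = ⇑L ∘ fun m => C m := by
    funext m
    exact spanPr_key c d e f g h k r hr (A m) (hAabs m)
  have hVli : LinearIndependent ℂ Vfam := by
    rw [hVeq]
    exact hCrows.map' L hLker
  -- finrank computations
  have h5W : Module.finrank ℂ ↥(Submodule.span ℂ (Set.range W)) = 5 := by
    rw [finrank_span_eq_card hWli, Fintype.card_fin]
  have h5V : Module.finrank ℂ ↥(Submodule.span ℂ (Set.range Vfam)) = 5 := by
    rw [finrank_span_eq_card hVli, Fintype.card_fin]
  refine le_antisymm ?_ ?_
  · rw [← h5W]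
    apply Submodule.finrank_mono
    rw [Submodule.span_le]
    rintro v ⟨α, hα, rfl⟩
    rw [spanPr_key c d e f g h k r hr α hα]
    exact Submodule.sum_smul_mem _ _ fun j _ =>
      Submodule.subset_span (Set.mem_range_self j)
  · rw [← h5V]
    apply Submodule.finrank_mono
    rw [Submodule.span_le]
    rintro v ⟨m, rfl⟩
    exact Submodule.subset_span ⟨A m, hAabs m, rfl⟩
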